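/- Let T_S = min(X_1,…,X_n) be the lifetime of a series system with independent components, and T_{S∖{j}} the minimum over all components except the j-th. Then GT_{T_S}(t) ≥ GT_{X_j}(t) for all t if and only if GT_{T_{S∖{j}}}(t) ≥ GT_{X_j}(t) for all t. -/

import Mathlib

open MeasureTheory intervalIntegral

noncomputable def GTindex (H : ℝ → ℝ) (t : ℝ) : ℝ :=
  1 - 2 / (t * H t) * ∫ u in (0:ℝ)..t, H u

lemma key_ineq (t a b α β : ℝ) (ht : 0 < t) (hα : 0 < α) (hβ : 0 < β) :
    (1 - 2 / (t * α) * a ≤ 1 - 2 / (t * (α + β)) * (a + b)) ↔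
      (1 - 2 / (t * α) * a ≤ 1 - 2 / (t * β) * b) := by
  rw [sub_le_sub_iff_left, sub_le_sub_iff_left, div_mul_eq_mul_div, div_mul_eq_mul_div,
    div_mul_eq_mul_div, div_le_div_iff₀ (by positivity) (by positivity),
    div_le_div_iff₀ (by positivity) (by positivity)]
  constructor <;> intro h <;> nlinarith [h]

/-- For a series system of `n` independent components with cumulative hazards `H i`
(so `H_{T_S} = ∑ i, H i` and `H_{T_{S∖{j}}} = ∑_{i ≠ j} H i`):
`GT_{T_S} ≥ GT_{X_j}` on `D¹` iff `GT_{T_{S∖{j}}} ≥ GT_{X_j}` on `D¹`. -/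
theorem stmt12 (n : ℕ) (hn : 2 ≤ n) (H : Fin n → ℝ → ℝ) (j : Fin n)
    (D : Set ℝ) (hD : D ⊆ Set.Ioi (0:ℝ))
    (hH0 : ∀ i, H i 0 = 0)
    (hHcont : ∀ i, ContinuousOn (H i) (Set.Ici 0))
    (hHpos : ∀ i, ∀ t ∈ D, 0 < H i t) :
    (∀ t ∈ D, GTindex (H j) t ≤ GTindex (fun s => ∑ i, H i s) t) ↔
      (∀ t ∈ D, GTindex (H j) t ≤
        GTindex (fun s => ∑ i ∈ Finset.univ.erase j, H i s) t) := by
  have main : ∀ t ∈ D,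
      (GTindex (H j) t ≤ GTindex (fun s => ∑ i, H i s) t ↔
        GTindex (H j) t ≤ GTindex (fun s => ∑ i ∈ Finset.univ.erase j, H i s) t) := by
    intro t htD
    have ht : 0 < t := hD htD
    have hint : ∀ i, IntervalIntegrable (H i) volume 0 t := by
      intro i
      apply ContinuousOn.intervalIntegrable
      apply (hHcont i).mono
      rw [Set.uIcc_of_le ht.le]
      exact fun x hx => hx.1
    have hsum : (∫ u in (0:ℝ)..t, ∑ i, H i u) = ∑ i, ∫ u in (0:ℝ)..t, H i u :=
      intervalIntegral.integral_finset_sum (fun i _ => hint i)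
    have hsum' : (∫ u in (0:ℝ)..t, ∑ i ∈ Finset.univ.erase j, H i u) =
        ∑ i ∈ Finset.univ.erase j, ∫ u in (0:ℝ)..t, H i u :=
      intervalIntegral.integral_finset_sum (fun i _ => hint i)
    set a := ∫ u in (0:ℝ)..t, H j u with ha
    set b := ∑ i ∈ Finset.univ.erase j, ∫ u in (0:ℝ)..t, H i u with hb
    set α := H j t with hα
    set β := ∑ i ∈ Finset.univ.erase j, H i t with hβ
    have hαpos : 0 < α := hHpos j t htD
    have hβpos : 0 < β := by
      apply Finset.sum_pos (fun i _ => hHpos i t htD)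
      -- erase j is nonempty since n ≥ 2
      have : 1 < (Finset.univ : Finset (Fin n)).card := by
        simpa [Finset.card_univ] using (show 1 < n by omega)
      obtain ⟨i, hi, hij⟩ := Finset.exists_mem_ne this j
      exact ⟨i, Finset.mem_erase.mpr ⟨hij, hi⟩⟩
    have hsplit : ∑ i, H i t = α + β :=
      (Finset.add_sum_erase Finset.univ (fun i => H i t) (Finset.mem_univ j)).symm
    have hsplitI : (∑ i, ∫ u in (0:ℝ)..t, H i u) = a + b :=
      (Finset.add_sum_erase Finset.univ (fun i => ∫ u in (0:ℝ)..t, H i u) (Finset.mem_univ j)).symm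
    simp only [GTindex, hsum, hsum', hsplit, hsplitI, ← ha, ← hb, ← hα, ← hβ]
    exact key_ineq t a b α β ht hαpos hβpos
  constructor <;> intro h t htD
  · exact (main t htD).mp (h t htD)
  · exact (main t htD).mpr (h t htD)
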